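/- Let R be a commutative Noetherian ring and x_1, …, x_t a regular sequence in R whose generated ideal P = (x_1, …, x_t) is prime. Let s ∈ R with s ∉ P, let g ∈ R and m ≥ 0, and assume s·g ∈ P^m. Then g ∈ P^m. -/

import Mathlib

/-- A list `xs = [x₁, …, xₙ]` of elements of a commutative ring `R` is a regular sequence if
each `xᵢ` is a nonzerodivisor modulo the ideal generated by its predecessors, and the ideal
`(x₁, …, xₙ)` is proper. -/
def IsRegularSeq {R : Type*} [CommRing R] (xs : List R) : Prop :=
  (∀ (i : Fin xs.length) (f : R),
      xs.get i * f ∈ Ideal.span {a | a ∈ xs.take (i : ℕ)} →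
        f ∈ Ideal.span {a | a ∈ xs.take (i : ℕ)}) ∧
    Ideal.span {a | a ∈ xs} ≠ ⊤

namespace RegSeqAux

open MvPolynomial

lemma fdeg_add {σ : Type*} (a b : σ →₀ ℕ) :
    (a + b).degree = a.degree + b.degree := by
  simp only [Finsupp.degree_eq_weight_one, map_add]

lemma fdeg_single {σ : Type*} (i : σ) (k : ℕ) :
    (Finsupp.single i k).degree = k := by
  classical
  simp [Finsupp.degree_eq_weight_one, Finsupp.weight_apply, Finsupp.sum_single_index]

variable {R : Type*} [CommRing R] (xs : List R)

/-- The ideal generated by the first `n` elements of `xs`. -/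
noncomputable def J (n : ℕ) : Ideal R := Ideal.span {a | a ∈ xs.take n}

lemma J_mono {m n : ℕ} (h : m ≤ n) : J xs m ≤ J xs n := by
  apply Ideal.span_mono
  intro a ha
  have : xs.take m = (xs.take n).take m := by
    rw [List.take_take, Nat.min_eq_left h]
  rw [Set.mem_setOf_eq, this] at ha
  exact List.mem_of_mem_take ha

lemma get_mem_J {i : Fin xs.length} {n : ℕ} (h : (i : ℕ) < n) :
    xs.get i ∈ J xs n := by
  apply Ideal.subset_span
  rw [Set.mem_setOf_eq, List.mem_take_iff_getElem]
  exact ⟨(i : ℕ), lt_min h i.isLt, rfl⟩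

/-- Evaluation of a polynomial at the sequence. -/
noncomputable def ev (A : MvPolynomial (Fin xs.length) R) : R :=
  MvPolynomial.eval (fun i => xs.get i) A

/-- All variables occurring in `A` have index `< n`. -/
def VarsLt (n : ℕ) (A : MvPolynomial (Fin xs.length) R) : Prop :=
  ∀ β ∈ A.support, ∀ i : Fin xs.length, β i ≠ 0 → (i : ℕ) < n

/-- All monomials of `A` have degree at least `d`. -/
def DegGe (d : ℕ) (A : MvPolynomial (Fin xs.length) R) : Prop :=
  ∀ β ∈ A.support, d ≤ β.degree

/-- All monomials of `A` have degree exactly `d`. -/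
def DegEq (d : ℕ) (A : MvPolynomial (Fin xs.length) R) : Prop :=
  ∀ β ∈ A.support, β.degree = d

lemma varsLt_mono {n n' : ℕ} (h : n ≤ n') {A : MvPolynomial (Fin xs.length) R}
    (hA : VarsLt xs n A) : VarsLt xs n' A :=
  fun β hβ i hi => lt_of_lt_of_le (hA β hβ i hi) h

lemma varsLt_top (A : MvPolynomial (Fin xs.length) R) : VarsLt xs xs.length A :=
  fun _ _ i _ => i.isLt

lemma degGe_of_degEq {d : ℕ} {A : MvPolynomial (Fin xs.length) R}
    (hA : DegEq xs d A) : DegGe xs d A :=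
  fun β hβ => le_of_eq (hA β hβ).symm

lemma X_eq (j : Fin xs.length) :
    (X j : MvPolynomial (Fin xs.length) R) = monomial (Finsupp.single j 1) 1 := rfl

lemma varsLt_C (n : ℕ) (c : R) : VarsLt xs n (C c : MvPolynomial (Fin xs.length) R) := by
  intro β hβ i hi
  rw [MvPolynomial.C_apply] at hβ
  have := MvPolynomial.support_monomial_subset hβ
  simp only [Finset.mem_singleton] at this
  subst this
  simp at hi

lemma degEq_C (c : R) : DegEq xs 0 (C c : MvPolynomial (Fin xs.length) R) := by
  intro β hβ
  rw [MvPolynomial.C_apply] at hβ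
  have := MvPolynomial.support_monomial_subset hβ
  simp only [Finset.mem_singleton] at this
  subst this
  simp

lemma varsLt_add {n : ℕ} {A B : MvPolynomial (Fin xs.length) R}
    (hA : VarsLt xs n A) (hB : VarsLt xs n B) : VarsLt xs n (A + B) := by
  intro β hβ i hi
  rcases Finset.mem_union.mp (MvPolynomial.support_add hβ) with h | h
  · exact hA β h i hi
  · exact hB β h i hi

lemma degEq_add {d : ℕ} {A B : MvPolynomial (Fin xs.length) R}
    (hA : DegEq xs d A) (hB : DegEq xs d B) : DegEq xs d (A + B) := by
  intro β hβ
  rcases Finset.mem_union.mp (MvPolynomial.support_add hβ) with h | h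
  · exact hA β h
  · exact hB β h

lemma varsLt_mul {n : ℕ} {A B : MvPolynomial (Fin xs.length) R}
    (hA : VarsLt xs n A) (hB : VarsLt xs n B) : VarsLt xs n (A * B) := by
  classical
  intro β hβ i hi
  obtain ⟨γ, hγ, δ, hδ, rfl⟩ := Finset.mem_add.mp (MvPolynomial.support_mul A B hβ)
  rcases Nat.add_eq_zero.not.mp (by simpa using hi) with h
  by_cases hγi : γ i ≠ 0
  · exact hA γ hγ i hγi
  · have : δ i ≠ 0 := by
      simp only [ne_eq, not_not] at hγi
      simpa [Finsupp.add_apply, hγi] using hi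
    exact hB δ hδ i this

lemma degEq_mul {a b : ℕ} {A B : MvPolynomial (Fin xs.length) R}
    (hA : DegEq xs a A) (hB : DegEq xs b B) : DegEq xs (a + b) (A * B) := by
  classical
  intro β hβ
  obtain ⟨γ, hγ, δ, hδ, rfl⟩ := Finset.mem_add.mp (MvPolynomial.support_mul A B hβ)
  rw [fdeg_add, hA γ hγ, hB δ hδ]

lemma prod_pow_mem {n : ℕ} :
    ∀ β : Fin xs.length →₀ ℕ, (∀ i, β i ≠ 0 → (i : ℕ) < n) →
      (β.prod fun i e => xs.get i ^ e) ∈ J xs n ^ β.degree := by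
  intro β
  induction β using Finsupp.induction with
  | zero => intro _; simp [Ideal.one_eq_top]
  | single_add a b f haf hb ih =>
    intro hvars
    have hprod : ((Finsupp.single a b + f).prod fun i e => xs.get i ^ e)
        = xs.get a ^ b * (f.prod fun i e => xs.get i ^ e) := by
      rw [Finsupp.prod_add_index' (fun i => pow_zero _) (fun i m1 m2 => pow_add _ _ _)]
      congr 1
      exact Finsupp.prod_single_index (pow_zero _)
    have hdeg : (Finsupp.single a b + f).degree = b + f.degree := by
      rw [fdeg_add, fdeg_single]
    rw [hprod, hdeg, pow_add]
    have ha_lt : (a : ℕ) < n := by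
      apply hvars a
      simp [Finsupp.add_apply, Finsupp.single_eq_same, hb]
    refine Ideal.mul_mem_mul (Ideal.pow_mem_pow (get_mem_J xs ha_lt) b) (ih ?_)
    intro i hi
    apply hvars i
    simp only [Finsupp.add_apply]
    omega

lemma eval_eq_sum (A : MvPolynomial (Fin xs.length) R) :
    ev xs A = ∑ β ∈ A.support, coeff β A * (β.prod fun i e => xs.get i ^ e) := by
  rw [ev, MvPolynomial.eval_eq]
  rfl

lemma eval_mem_pow {n d : ℕ} {A : MvPolynomial (Fin xs.length) R}
    (hv : VarsLt xs n A) (hd : DegGe xs d A) : ev xs A ∈ J xs n ^ d := by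
  rw [eval_eq_sum]
  apply Submodule.sum_mem
  intro β hβ
  apply Ideal.mul_mem_left
  exact Ideal.pow_le_pow_right (hd β hβ) (prod_pow_mem xs β (fun i hi => hv β hβ i hi))

lemma eval_mem_pow_succ {n d : ℕ} {A : MvPolynomial (Fin xs.length) R}
    (hv : VarsLt xs n A) (hd : DegGe xs d A)
    (hc : ∀ β ∈ A.support, coeff β A ∈ J xs n) : ev xs A ∈ J xs n ^ (d + 1) := by
  rw [eval_eq_sum]
  apply Submodule.sum_mem
  intro β hβ
  rw [pow_succ']
  exact Ideal.mul_mem_mul (hc β hβ)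
    (Ideal.pow_le_pow_right (hd β hβ) (prod_pow_mem xs β (fun i hi => hv β hβ i hi)))

/-- Representation lemma: every element of `(J n)^k` is the value of a polynomial in the
first `n` variables all of whose monomials have degree exactly `k`. -/
lemma rep {n : ℕ} : ∀ {k : ℕ} {g : R}, g ∈ J xs n ^ k →
    ∃ D : MvPolynomial (Fin xs.length) R,
      VarsLt xs n D ∧ DegEq xs k D ∧ ev xs D = g := by
  intro k
  induction k with
  | zero =>
    intro g _
    exact ⟨C g, varsLt_C xs n g, degEq_C xs g, by simp [ev]⟩
  | succ k ih =>
    intro g hg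
    rw [pow_succ] at hg
    refine Submodule.mul_induction_on hg ?_ ?_
    · intro a ha b hb
      obtain ⟨Da, hva, hda, hea⟩ := ih ha
      have hb' : ∃ Db : MvPolynomial (Fin xs.length) R,
          VarsLt xs n Db ∧ DegEq xs 1 Db ∧ ev xs Db = b := by
        refine Submodule.span_induction ?_ ?_ ?_ ?_ hb
        · intro y hy
          rw [Set.mem_setOf_eq, List.mem_take_iff_getElem] at hy
          obtain ⟨j, hj, rfl⟩ := hy
          have hjlen : j < xs.length := lt_of_lt_of_le hj (min_le_right _ _)
          have hjn : j < n := lt_of_lt_of_le hj (min_le_left _ _)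
          refine ⟨X ⟨j, hjlen⟩, ?_, ?_, by simp [ev]⟩
          · intro β hβ i hi
            rw [X_eq] at hβ
            have hsub := MvPolynomial.support_monomial_subset hβ
            simp only [Finset.mem_singleton] at hsub
            subst hsub
            rw [Finsupp.single_apply_ne_zero] at hi
            rw [hi.1]
            exact hjn
          · intro β hβ
            rw [X_eq] at hβ
            have hsub := MvPolynomial.support_monomial_subset hβ
            simp only [Finset.mem_singleton] at hsub
            subst hsub
            exact fdeg_single _ _
        · exact ⟨0, by intro β hβ; simp at hβ, by intro β hβ; simp at hβ, by simp [ev]⟩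
        · rintro y z - - ⟨Dy, h1, h2, h3⟩ ⟨Dz, h4, h5, h6⟩
          exact ⟨Dy + Dz, varsLt_add xs h1 h4, degEq_add xs h2 h5, by
            simp [ev] at h3 h6 ⊢; rw [h3, h6]⟩
        · rintro r y - ⟨Dy, h1, h2, h3⟩
          refine ⟨C r * Dy, varsLt_mul xs (varsLt_C xs n r) h1, ?_, by
            have hmul : ev xs (C r * Dy) = r * ev xs Dy := by simp [ev]
            rw [hmul, h3, smul_eq_mul]⟩
          have := degEq_mul xs (degEq_C xs r) h2
          simpa using this
      obtain ⟨Db, hvb, hdb, heb⟩ := hb'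
      refine ⟨Da * Db, varsLt_mul xs hva hvb, degEq_mul xs hda hdb, ?_⟩
      simp only [ev, map_mul]
      rw [← ev, ← ev, hea, heb]
    · rintro a b ⟨Da, h1, h2, h3⟩ ⟨Db, h4, h5, h6⟩
      exact ⟨Da + Db, varsLt_add xs h1 h4, degEq_add xs h2 h5, by
        simp only [ev, map_add]; rw [← ev, ← ev, h3, h6]⟩


lemma varsLt_sub {n : ℕ} {A B : MvPolynomial (Fin xs.length) R}
    (hA : VarsLt xs n A) (hB : VarsLt xs n B) : VarsLt xs n (A - B) := by
  classical
  intro β hβ i hi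
  rcases Finset.mem_union.mp (MvPolynomial.support_sub _ A B hβ) with h | h
  · exact hA β h i hi
  · exact hB β h i hi

lemma degGe_sub {d : ℕ} {A B : MvPolynomial (Fin xs.length) R}
    (hA : DegGe xs d A) (hB : DegGe xs d B) : DegGe xs d (A - B) := by
  classical
  intro β hβ
  rcases Finset.mem_union.mp (MvPolynomial.support_sub _ A B hβ) with h | h
  · exact hA β h
  · exact hB β h

lemma degGe_add {d : ℕ} {A B : MvPolynomial (Fin xs.length) R}
    (hA : DegGe xs d A) (hB : DegGe xs d B) : DegGe xs d (A + B) := by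
  classical
  intro β hβ
  rcases Finset.mem_union.mp (MvPolynomial.support_add hβ) with h | h
  · exact hA β h
  · exact hB β h

/-- The degree-zero case of the main theorem. -/
lemma Tbase {n : ℕ} {A : MvPolynomial (Fin xs.length) R}
    (hv : VarsLt xs n A) (h0 : ev xs A = 0) {β : Fin xs.length →₀ ℕ}
    (hβ : β.degree = 0) : coeff β A ∈ J xs n := by
  have hβ0 : β = 0 := (Finsupp.degree_eq_zero_iff β).mp hβ
  subst hβ0
  have hco : coeff 0 (A - C (coeff 0 A)) = 0 := by
    simp [MvPolynomial.coeff_C]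
  have hsupp : ∀ γ ∈ (A - C (coeff 0 A)).support, γ ∈ A.support ∧ γ ≠ 0 := by
    intro γ hγ
    have hne : coeff γ (A - C (coeff 0 A)) ≠ 0 := MvPolynomial.mem_support_iff.mp hγ
    have hγ0 : γ ≠ 0 := by rintro rfl; exact hne hco
    refine ⟨MvPolynomial.mem_support_iff.mpr ?_, hγ0⟩
    intro hcA
    apply hne
    rw [MvPolynomial.coeff_sub, hcA, MvPolynomial.coeff_C, if_neg (Ne.symm hγ0), sub_zero]
  have hv' : VarsLt xs n (A - C (coeff 0 A)) := fun γ hγ i hi => hv γ (hsupp γ hγ).1 i hi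
  have hd' : DegGe xs 1 (A - C (coeff 0 A)) := by
    intro γ hγ
    refine Nat.one_le_iff_ne_zero.mpr (fun hdeg => (hsupp γ hγ).2 ?_)
    exact (Finsupp.degree_eq_zero_iff γ).mp hdeg
  have hev : ev xs (A - C (coeff 0 A)) = - coeff 0 A := by
    simp only [ev, map_sub, MvPolynomial.eval_C]
    rw [← ev, h0, zero_sub]
  have hmem := eval_mem_pow xs hv' hd'
  rw [pow_one, hev] at hmem
  simpa using neg_mem hmem

/-- Colon lemma: multiplication by the `n`-th element can be cancelled from membership
in powers of the ideal of the first `n` elements. -/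
lemma colon {n : ℕ} (hn : n < xs.length)
    (hT : ∀ d (A : MvPolynomial (Fin xs.length) R), VarsLt xs n A → DegGe xs d A →
      ev xs A = 0 → ∀ β : Fin xs.length →₀ ℕ, β.degree = d → coeff β A ∈ J xs n)
    (hx : ∀ f : R, xs.get ⟨n, hn⟩ * f ∈ J xs n → f ∈ J xs n) :
    ∀ (k : ℕ) (u : R), xs.get ⟨n, hn⟩ * u ∈ J xs n ^ k → u ∈ J xs n ^ k := by
  intro k
  induction k with
  | zero => intro u _; simp [Ideal.one_eq_top]
  | succ k ih =>
    intro u hu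
    have hu' : u ∈ J xs n ^ k := ih u (Ideal.pow_le_pow_right (Nat.le_succ k) hu)
    obtain ⟨U, hvU, hdU, heU⟩ := rep xs hu'
    obtain ⟨W, hvW, hdW, heW⟩ := rep xs hu
    have hvA : VarsLt xs n (C (xs.get ⟨n, hn⟩) * U - W) :=
      varsLt_sub xs (varsLt_mul xs (varsLt_C xs n _) hvU) hvW
    have hdA : DegGe xs k (C (xs.get ⟨n, hn⟩) * U - W) := by
      refine degGe_sub xs ?_ ?_
      · have := degEq_mul xs (degEq_C xs (xs.get ⟨n, hn⟩)) hdU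
        rw [zero_add] at this
        exact degGe_of_degEq xs this
      · intro γ hγ; rw [hdW γ hγ]; omega
    have hevA : ev xs (C (xs.get ⟨n, hn⟩) * U - W) = 0 := by
      simp only [ev, map_sub, map_mul, MvPolynomial.eval_C]
      rw [← ev, ← ev, heU, heW, sub_self]
    have hUc : ∀ γ ∈ U.support, coeff γ U ∈ J xs n := by
      intro γ hγ
      have h1 := hT k _ hvA hdA hevA γ (hdU γ hγ)
      rw [MvPolynomial.coeff_sub, MvPolynomial.coeff_C_mul] at h1
      have hWγ : coeff γ W = 0 := by
        by_contra hne
        have := hdW γ (MvPolynomial.mem_support_iff.mpr hne)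
        have := hdU γ hγ
        omega
      rw [hWγ, sub_zero] at h1
      exact hx _ h1
    have hfin := eval_mem_pow_succ xs hvU (degGe_of_degEq xs hdU) hUc
    rwa [heU] at hfin

/-- The key quasi-regularity statement, by double induction. -/
lemma T (hreg : ∀ (i : Fin xs.length) (f : R),
      xs.get i * f ∈ Ideal.span {a | a ∈ xs.take (i : ℕ)} →
        f ∈ Ideal.span {a | a ∈ xs.take (i : ℕ)}) :
    ∀ n, n ≤ xs.length → ∀ d (A : MvPolynomial (Fin xs.length) R),
      VarsLt xs n A → DegGe xs d A → ev xs A = 0 →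
      ∀ β : Fin xs.length →₀ ℕ, β.degree = d → coeff β A ∈ J xs n := by
  intro n
  induction n with
  | zero =>
    intro _ d A hv hd h0 β hβ
    by_cases hβs : β ∈ A.support
    · have hβ0 : β = 0 := by
        ext i
        by_contra hne
        exact absurd (hv β hβs i hne) (Nat.not_lt_zero _)
      refine Tbase xs hv h0 ?_
      rw [hβ0]; exact map_zero Finsupp.degree
    · rw [MvPolynomial.notMem_support_iff.mp hβs]
      exact zero_mem _
  | succ n ihn =>
    intro hn1 d
    have hnlt : n < xs.length := hn1
    have hn : n ≤ xs.length := Nat.le_of_lt hn1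
    induction d with
    | zero =>
      intro A hv hd h0 β hβ
      exact Tbase xs hv h0 hβ
    | succ d ihd =>
      intro A hv hd h0 β hβ
      classical
      set i : Fin xs.length := ⟨n, hnlt⟩ with hidef
      set e : Fin xs.length →₀ ℕ := Finsupp.single i 1 with hedef
      set B := A.modMonomial e with hBdef
      set Cq := A.divMonomial e with hCdef
      have hiv : (i : ℕ) = n := rfl
      have hsuppB : ∀ γ ∈ B.support, γ ∈ A.support ∧ γ i = 0 := by
        intro γ hγ
        have hne : coeff γ B ≠ 0 := MvPolynomial.mem_support_iff.mp hγ
        by_cases hle : e ≤ γ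
        · exact absurd (MvPolynomial.coeff_modMonomial_of_le A hle) hne
        · have hγi : γ i = 0 := by
            by_contra hne2
            exact hle (hedef ▸ Finsupp.single_le_iff.mpr (Nat.one_le_iff_ne_zero.mpr hne2))
          have hcoeq : coeff γ B = coeff γ A := MvPolynomial.coeff_modMonomial_of_not_le A hle
          exact ⟨MvPolynomial.mem_support_iff.mpr (hcoeq ▸ hne), hγi⟩
      have hvB : VarsLt xs n B := by
        intro γ hγ j hj
        obtain ⟨hγA, hγi⟩ := hsuppB γ hγ
        have hlt := hv γ hγA j hj
        have hne : (j : ℕ) ≠ n := by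
          intro hjn
          have hji : j = i := Fin.ext (by rw [hjn, hiv])
          rw [hji, hγi] at hj
          exact hj rfl
        omega
      have hdB : DegGe xs (d+1) B := fun γ hγ => hd γ (hsuppB γ hγ).1
      have hcoeffC : ∀ γ : Fin xs.length →₀ ℕ, coeff γ Cq = coeff (e + γ) A := fun γ =>
        MvPolynomial.coeff_divMonomial e A γ
      have hsuppC : ∀ γ ∈ Cq.support, e + γ ∈ A.support := by
        intro γ hγ
        have hne : coeff γ Cq ≠ 0 := MvPolynomial.mem_support_iff.mp hγ
        rw [hcoeffC] at hne
        exact MvPolynomial.mem_support_iff.mpr hne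
      have hvC : VarsLt xs (n+1) Cq := by
        intro γ hγ j hj
        refine hv (e + γ) (hsuppC γ hγ) j ?_
        simp only [Finsupp.add_apply]
        omega
      have hdC : DegGe xs d Cq := by
        intro γ hγ
        have := hd (e + γ) (hsuppC γ hγ)
        rw [fdeg_add, hedef, fdeg_single] at this
        omega
      have hp : (Finsupp.single i (1:ℕ)).prod (fun j k => xs.get j ^ k) = xs.get i := by
        simp
      have hmon : ev xs (monomial e 1 * Cq) = xs.get i * ev xs Cq := by
        simp only [ev, map_mul, MvPolynomial.eval_monomial, hedef, hp, one_mul]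
      have hsplit : xs.get i * ev xs Cq + ev xs B = 0 := by
        have h2 : ev xs (monomial e 1 * Cq) + ev xs B = 0 := by
          have h3 : ev xs (monomial e 1 * Cq + B) = 0 := by
            rw [hBdef, hCdef, MvPolynomial.divMonomial_add_modMonomial]
            exact h0
          simpa only [ev, map_add] using h3
        rw [← hmon]
        exact h2
      have hBmem : ev xs B ∈ J xs n ^ (d+1) := eval_mem_pow xs hvB hdB
      have hxC : xs.get i * ev xs Cq ∈ J xs n ^ (d+1) := by
        have heq : xs.get i * ev xs Cq = - ev xs B := eq_neg_of_add_eq_zero_left hsplit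
        rw [heq]
        exact neg_mem hBmem
      have hxcol : ∀ f : R, xs.get ⟨n, hnlt⟩ * f ∈ J xs n → f ∈ J xs n := fun f hf =>
        hreg ⟨n, hnlt⟩ f hf
      have hCmem : ev xs Cq ∈ J xs n ^ (d+1) :=
        colon xs hnlt (fun d' => ihn hn d') hxcol (d+1) _ hxC
      obtain ⟨D, hvD, hdD, heD⟩ := rep xs hCmem
      have h1 : ∀ γ : Fin xs.length →₀ ℕ, γ.degree = d → coeff γ (Cq - D) ∈ J xs (n+1) := by
        refine ihd (Cq - D) (varsLt_sub xs hvC (varsLt_mono xs (Nat.le_succ n) hvD)) ?_ ?_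
        · refine degGe_sub xs hdC ?_
          intro γ hγ; rw [hdD γ hγ]; omega
        · have hh : ev xs (Cq - D) = ev xs Cq - ev xs D := by simp [ev]
          rw [hh, heD, sub_self]
      have h2 : ∀ γ : Fin xs.length →₀ ℕ, γ.degree = d + 1 →
          coeff γ (B + C (xs.get i) * D) ∈ J xs n := by
        refine ihn hn (d+1) _ ?_ ?_ ?_
        · exact varsLt_add xs hvB (varsLt_mul xs (varsLt_C xs n _) hvD)
        · refine degGe_add xs hdB ?_
          have := degEq_mul xs (degEq_C xs (xs.get i)) hdD
          rw [zero_add] at this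
          exact degGe_of_degEq xs this
        · have hh : ev xs (B + C (xs.get i) * D) = ev xs B + xs.get i * ev xs D := by
            simp [ev]
          rw [hh, heD, add_comm]
          exact hsplit
      by_cases hβi : β i = 0
      · have hc := h2 β hβ
        rw [MvPolynomial.coeff_add, MvPolynomial.coeff_C_mul] at hc
        have hB_A : coeff β B = coeff β A := by
          refine MvPolynomial.coeff_modMonomial_of_not_le A ?_
          intro hle
          rw [hedef, Finsupp.single_le_iff, hβi] at hle
          omega
        rw [hB_A] at hc
        have hxiJ : xs.get i ∈ J xs (n+1) := get_mem_J xs (by rw [hiv]; omega)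
        have hrw : coeff β A
            = (coeff β A + xs.get i * coeff β D) - xs.get i * coeff β D := by ring
        rw [hrw]
        exact sub_mem (J_mono xs (Nat.le_succ n) hc) (Ideal.mul_mem_right _ _ hxiJ)
      · have hβe : β = e + (β - e) := by
          ext j
          rw [Finsupp.add_apply, Finsupp.tsub_apply]
          rcases eq_or_ne j i with hji | hne
          · rw [hji, hedef, Finsupp.single_eq_same]
            omega
          · rw [hedef, Finsupp.single_eq_of_ne' (Ne.symm hne)]
            omega
        have hedeg : e.degree = 1 := by rw [hedef]; exact fdeg_single _ _
        have hdγ : (β - e).degree = d := by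
          have hdb : β.degree = e.degree + (β - e).degree := by
            conv_lhs => rw [hβe]
            exact fdeg_add _ _
          rw [hedeg, hβ] at hdb
          omega
        have hc := h1 (β - e) hdγ
        rw [MvPolynomial.coeff_sub] at hc
        have hγD : coeff (β - e) D = 0 := by
          by_contra hne
          have := hdD (β - e) (MvPolynomial.mem_support_iff.mpr hne)
          omega
        rw [hγD, sub_zero, hcoeffC, ← hβe] at hc
        exact hc

end RegSeqAux

theorem mem_prime_pow_of_mul_mem
    {R : Type*} [CommRing R] [IsNoetherianRing R] (xs : List R)
    (hreg : IsRegularSeq xs)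
    (P : Ideal R) (hP : P = Ideal.span {a | a ∈ xs}) (hprime : P.IsPrime)
    (s g : R) (hs : s ∉ P) (m : ℕ) (h : s * g ∈ P ^ m) :
    g ∈ P ^ m := by
  classical
  have hP' : P = RegSeqAux.J xs xs.length := by
    rw [hP]
    unfold RegSeqAux.J
    rw [List.take_length]
  revert h
  induction m with
  | zero =>
    intro _
    rw [pow_zero, Ideal.one_eq_top]
    exact Submodule.mem_top
  | succ m ih =>
    intro h
    have hg : g ∈ P ^ m := ih (Ideal.pow_le_pow_right (Nat.le_succ m) h)
    obtain ⟨G, hvG, hdG, heG⟩ := RegSeqAux.rep xs (hP' ▸ hg)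
    obtain ⟨E, hvE, hdE, heE⟩ := RegSeqAux.rep xs (hP' ▸ h)
    have hsg : RegSeqAux.ev xs (MvPolynomial.C s * G) = s * g := by
      have : RegSeqAux.ev xs (MvPolynomial.C s * G) = s * RegSeqAux.ev xs G := by
        simp [RegSeqAux.ev]
      rw [this, heG]
    have hdsG : RegSeqAux.DegEq xs m (MvPolynomial.C s * G) := by
      have := RegSeqAux.degEq_mul xs (RegSeqAux.degEq_C xs s) hdG
      rwa [zero_add] at this
    have hT := RegSeqAux.T xs hreg.1 xs.length le_rfl m (MvPolynomial.C s * G - E)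
      (RegSeqAux.varsLt_top xs _)
      (RegSeqAux.degGe_sub xs (RegSeqAux.degGe_of_degEq xs hdsG)
        (fun γ hγ => by rw [hdE γ hγ]; omega))
      (by
        have hh : RegSeqAux.ev xs (MvPolynomial.C s * G - E)
            = RegSeqAux.ev xs (MvPolynomial.C s * G) - RegSeqAux.ev xs E := by
          simp [RegSeqAux.ev]
        rw [hh, hsg, heE, sub_self])
    have hGc : ∀ β ∈ G.support, MvPolynomial.coeff β G ∈ RegSeqAux.J xs xs.length := by
      intro β hβ
      have hdβ := hdG β hβ
      have h1 := hT β hdβ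
      rw [MvPolynomial.coeff_sub, MvPolynomial.coeff_C_mul] at h1
      have hE0 : MvPolynomial.coeff β E = 0 := by
        by_contra hne
        have := hdE β (MvPolynomial.mem_support_iff.mpr hne)
        omega
      rw [hE0, sub_zero] at h1
      have hsP : s * MvPolynomial.coeff β G ∈ P := by rw [hP']; exact h1
      rcases hprime.mem_or_mem hsP with h' | h'
      · exact absurd h' hs
      · rw [← hP']; exact h'
    have hfin := RegSeqAux.eval_mem_pow_succ xs (RegSeqAux.varsLt_top xs G)
      (RegSeqAux.degGe_of_degEq xs hdG) hGc
    rw [heG] at hfin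
    rw [hP']
    exact hfin
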